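/- Let N = 2^n and F_N = F_2^{⊗n} over GF(2) with F_2 = [[1,0],[1,1]]. For N/2 + 1 ≤ i ≤ N, the linear code generated by rows i through N of F_N and the linear code generated by rows N + 2 − i through N of F_N are dual codes of each other (as subspaces of GF(2)^N with the standard bilinear form). -/

import Mathlib

open Finset Matrix

/-- The Arıkan kernel F₂ = [[1,0],[1,1]] over GF(2). -/
def F2 : Matrix (Fin 2) (Fin 2) (ZMod 2) := !![1, 0; 1, 1]

/-- The polar transform F_N = F₂^{⊗n} over GF(2) (entrywise Kronecker power). -/
def FN : (n : ℕ) → Matrix (Fin (2 ^ n)) (Fin (2 ^ n)) (ZMod 2)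
  | 0 => 1
  | n + 1 => fun i j =>
      F2 ⟨i.val / 2 ^ n, by
            have hi := i.isLt
            have h : (2 : ℕ) ^ (n + 1) = 2 ^ n * 2 := pow_succ 2 n
            exact (Nat.div_lt_iff_lt_mul (Nat.two_pow_pos n)).mpr (by omega)⟩
         ⟨j.val / 2 ^ n, by
            have hj := j.isLt
            have h : (2 : ℕ) ^ (n + 1) = 2 ^ n * 2 := pow_succ 2 n
            exact (Nat.div_lt_iff_lt_mul (Nat.two_pow_pos n)).mpr (by omega)⟩
      * FN n ⟨i.val % 2 ^ n, Nat.mod_lt _ (Nat.two_pow_pos n)⟩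
             ⟨j.val % 2 ^ n, Nat.mod_lt _ (Nat.two_pow_pos n)⟩

lemma div_pow_lt {n : ℕ} (i : Fin (2 ^ (n+1))) : i.val / 2 ^ n < 2 := by
  have hi := i.isLt
  have h : (2 : ℕ) ^ (n + 1) = 2 ^ n * 2 := pow_succ 2 n
  exact (Nat.div_lt_iff_lt_mul (Nat.two_pow_pos n)).mpr (by omega)

lemma FN_succ (n : ℕ) (i j : Fin (2 ^ (n+1)))
    (p1 : i.val / 2^n < 2) (p2 : j.val / 2^n < 2)
    (p3 : i.val % 2^n < 2^n) (p4 : j.val % 2^n < 2^n) :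
    FN (n+1) i j = F2 ⟨i.val / 2^n, p1⟩ ⟨j.val / 2^n, p2⟩
        * FN n ⟨i.val % 2^n, p3⟩ ⟨j.val % 2^n, p4⟩ := rfl

lemma sum_split (M : ℕ) (hM : 0 < M) (f : Fin (2 * M) → ZMod 2) (g h : ℕ → ZMod 2)
    (hf : ∀ j : Fin (2 * M), f j = g (j.val / M) * h (j.val % M)) :
    ∑ j, f j = (∑ a : Fin 2, g a.val) * (∑ b : Fin M, h b.val) := by
  rw [← (finProdFinEquiv (m := 2) (n := M)).sum_comp f]
  rw [Fintype.sum_prod_type, Finset.sum_mul_sum]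
  refine Finset.sum_congr rfl fun a _ => Finset.sum_congr rfl fun b _ => ?_
  rw [hf]
  have h1 : ((finProdFinEquiv (a, b) : Fin (2 * M)) : ℕ) = b.val + M * a.val := rfl
  have hb := b.isLt
  have h2 : (b.val + M * a.val) / M = a.val := by
    rw [Nat.add_mul_div_left _ _ hM, Nat.div_eq_of_lt hb]; omega
  have h3 : (b.val + M * a.val) % M = b.val := by
    rw [Nat.add_mul_mod_self_left, Nat.mod_eq_of_lt hb]
  rw [h1, h2, h3]

/-- split for sums ∑_j FN(n+1) k j * FN(n+1) l j -/
lemma FN_sum_split (n : ℕ) (k l : Fin (2 ^ (n+1))) :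
    ∑ j, FN (n+1) k j * FN (n+1) l j =
      (∑ a : Fin 2, F2 ⟨k.val / 2^n, div_pow_lt k⟩ a * F2 ⟨l.val / 2^n, div_pow_lt l⟩ a) *
      (∑ b : Fin (2^n), FN n ⟨k.val % 2^n, Nat.mod_lt _ (Nat.two_pow_pos n)⟩ b *
                        FN n ⟨l.val % 2^n, Nat.mod_lt _ (Nat.two_pow_pos n)⟩ b) := by
  have hN : (2:ℕ) * 2^n = 2^(n+1) := by ring
  rw [← Fintype.sum_equiv (finCongr hN)
        (fun j : Fin (2 * 2^n) => FN (n+1) k (finCongr hN j) * FN (n+1) l (finCongr hN j))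
        (fun j => FN (n+1) k j * FN (n+1) l j) (fun j => rfl)]
  rw [sum_split (2^n) (Nat.two_pow_pos n) _
      (fun a => F2 ⟨k.val / 2^n, div_pow_lt k⟩ ⟨a % 2, Nat.mod_lt _ two_pos⟩ *
                F2 ⟨l.val / 2^n, div_pow_lt l⟩ ⟨a % 2, Nat.mod_lt _ two_pos⟩)
      (fun b => FN n ⟨k.val % 2^n, Nat.mod_lt _ (Nat.two_pow_pos n)⟩ ⟨b % 2^n, Nat.mod_lt _ (Nat.two_pow_pos n)⟩ *
                FN n ⟨l.val % 2^n, Nat.mod_lt _ (Nat.two_pow_pos n)⟩ ⟨b % 2^n, Nat.mod_lt _ (Nat.two_pow_pos n)⟩)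
      ?_]
  · have hg : ∀ a : Fin 2, (⟨a.val % 2, Nat.mod_lt _ two_pos⟩ : Fin 2) = a :=
      fun a => Fin.ext (Nat.mod_eq_of_lt a.isLt)
    have hh : ∀ b : Fin (2^n), (⟨b.val % 2^n, Nat.mod_lt _ (Nat.two_pow_pos n)⟩ : Fin (2^n)) = b :=
      fun b => Fin.ext (Nat.mod_eq_of_lt b.isLt)
    simp only [hg, hh]
  · intro j
    have hj := j.isLt
    have hdiv : j.val / 2^n < 2 := (Nat.div_lt_iff_lt_mul (Nat.two_pow_pos n)).mpr (by omega)
    have e1 : ((finCongr hN j : Fin (2^(n+1))) : ℕ) = j.val := rfl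
    rw [FN_succ n k (finCongr hN j) (div_pow_lt k) (by rw [e1]; exact hdiv)
          (Nat.mod_lt _ (Nat.two_pow_pos n)) (by rw [e1]; exact Nat.mod_lt _ (Nat.two_pow_pos n)),
        FN_succ n l (finCongr hN j) (div_pow_lt l) (by rw [e1]; exact hdiv)
          (Nat.mod_lt _ (Nat.two_pow_pos n)) (by rw [e1]; exact Nat.mod_lt _ (Nat.two_pow_pos n))]
    simp only [e1]
    have e2 : (⟨j.val / 2^n % 2, Nat.mod_lt _ two_pos⟩ : Fin 2) = ⟨j.val / 2^n, hdiv⟩ :=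
      Fin.ext (Nat.mod_eq_of_lt hdiv)
    have e3 : (⟨j.val % 2^n % 2^n, Nat.mod_lt _ (Nat.two_pow_pos n)⟩ : Fin (2^n))
        = ⟨j.val % 2^n, Nat.mod_lt _ (Nat.two_pow_pos n)⟩ :=
      Fin.ext (Nat.mod_eq_of_lt (Nat.mod_lt _ (Nat.two_pow_pos n)))
    rw [e2, e3]
    ring

lemma FN_ortho : ∀ (n : ℕ) (k l : Fin (2^n)), 2^n ≤ k.val + l.val →
    ∑ j, FN n k j * FN n l j = 0 := by
  intro n
  induction n with
  | zero =>
    intro k l h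
    have hk := k.isLt; have hl := l.isLt
    simp only [pow_zero] at hk hl h
    omega
  | succ n ih =>
    intro k l h
    rw [FN_sum_split]
    by_cases h1 : k.val / 2^n = 1 ∧ l.val / 2^n = 1
    · have e1 : (⟨k.val / 2^n, div_pow_lt k⟩ : Fin 2) = 1 := Fin.ext h1.1
      have e2 : (⟨l.val / 2^n, div_pow_lt l⟩ : Fin 2) = 1 := Fin.ext h1.2
      rw [e1, e2]
      have : (∑ a : Fin 2, F2 1 a * F2 1 a) = 0 := by decide
      rw [this, zero_mul]
    · have hk := div_pow_lt k
      have hl := div_pow_lt l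
      have hk2 := Nat.div_add_mod k.val (2^n)
      have hl2 := Nat.div_add_mod l.val (2^n)
      have hp : (2:ℕ)^(n+1) = 2*2^n := by ring
      have hdk : k.val/2^n = 0 ∨ k.val/2^n = 1 := by
        rcases Nat.lt_or_ge (k.val/2^n) 1 with hq | hq
        · exact Or.inl (Nat.lt_one_iff.mp hq)
        · exact Or.inr (le_antisymm (Nat.lt_succ_iff.mp hk) hq)
      have hdl : l.val/2^n = 0 ∨ l.val/2^n = 1 := by
        rcases Nat.lt_or_ge (l.val/2^n) 1 with hq | hq
        · exact Or.inl (Nat.lt_one_iff.mp hq)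
        · exact Or.inr (le_antisymm (Nat.lt_succ_iff.mp hl) hq)
      have key : 2^n ≤ k.val % 2^n + l.val % 2^n := by
        rcases hdk with h2|h2 <;> rcases hdl with h3|h3 <;> rw [h2] at hk2 <;> rw [h3] at hl2 <;>
          omega
      rw [ih _ _ key, mul_zero]

lemma FN_diag : ∀ (n : ℕ) (i : Fin (2^n)), FN n i i = 1 := by
  intro n
  induction n with
  | zero => intro i; exact Matrix.one_apply_eq i
  | succ n ih =>
    intro i
    rw [FN_succ n i i (div_pow_lt i) (div_pow_lt i)
        (Nat.mod_lt _ (Nat.two_pow_pos n)) (Nat.mod_lt _ (Nat.two_pow_pos n)), ih]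
    have : ∀ a : Fin 2, F2 a a = 1 := by decide
    rw [this, one_mul]

lemma FN_lowerTri : ∀ (n : ℕ) (i j : Fin (2^n)), i.val < j.val → FN n i j = 0 := by
  intro n
  induction n with
  | zero =>
    intro i j h
    have hi := i.isLt; have hj := j.isLt
    simp only [pow_zero] at hi hj
    omega
  | succ n ih =>
    intro i j h
    rw [FN_succ n i j (div_pow_lt i) (div_pow_lt j)
        (Nat.mod_lt _ (Nat.two_pow_pos n)) (Nat.mod_lt _ (Nat.two_pow_pos n))]
    rcases lt_or_eq_of_le (Nat.div_le_div_right (le_of_lt h) (c := 2^n)) with hd | hd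
    · have : ∀ a b : Fin 2, a.val < b.val → F2 a b = 0 := by
        intro a b hab; fin_cases a <;> fin_cases b <;> simp_all [F2]
      rw [this _ _ hd, zero_mul]
    · have hm : i.val % 2^n < j.val % 2^n := by
        have hi2 := Nat.div_add_mod i.val (2^n)
        have hj2 := Nat.div_add_mod j.val (2^n)
        rw [← hd] at hj2
        generalize 2^n * (i.val / 2^n) = t at hi2 hj2
        omega
      rw [ih _ _ hm, mul_zero]

lemma FN_isUnit (n : ℕ) : IsUnit (FN n) := by
  rw [Matrix.isUnit_iff_isUnit_det]
  have : (FN n).det = ∏ i, FN n i i :=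
    Matrix.det_of_lowerTriangular (FN n) (fun i j hij => FN_lowerTri n i j hij)
  rw [this]
  simp [FN_diag]

/-- The linear code generated by rows a, a+1, ..., N of F_N (1-indexed a). -/
def rowSpan (n a : ℕ) : Submodule (ZMod 2) (Fin (2 ^ n) → ZMod 2) :=
  Submodule.span (ZMod 2) {r | ∃ k : Fin (2 ^ n), a ≤ k.val + 1 ∧ r = FN n k}

/-- The dual code of a code C ⊆ GF(2)^N under the standard bilinear form. -/
def dualCode (n : ℕ) (C : Set (Fin (2 ^ n) → ZMod 2)) : Set (Fin (2 ^ n) → ZMod 2) :=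
  {v | ∀ c ∈ C, ∑ j, v j * c j = 0}

noncomputable def Bf (n : ℕ) : LinearMap.BilinForm (ZMod 2) (Fin (2 ^ n) → ZMod 2) :=
  Matrix.toBilin' (1 : Matrix (Fin (2^n)) (Fin (2^n)) (ZMod 2))

lemma Bf_apply (n : ℕ) (v w : Fin (2^n) → ZMod 2) : Bf n v w = ∑ j, v j * w j := by
  rw [Bf, Matrix.toBilin'_apply', Matrix.one_mulVec]
  rfl

lemma Bf_symm (n : ℕ) (v w : Fin (2^n) → ZMod 2) : Bf n v w = Bf n w v := by
  rw [Bf_apply, Bf_apply]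
  exact Finset.sum_congr rfl fun j _ => mul_comm _ _

lemma Bf_refl (n : ℕ) : (Bf n).IsRefl := fun x y h => by rw [Bf_symm]; exact h

lemma Bf_nondeg (n : ℕ) : (Bf n).Nondegenerate := by
  refine (LinearMap.IsRefl.nondegenerate_iff_separatingLeft (Bf_refl n)).mpr ?_
  intro v hv
  funext j
  have := hv (Pi.single j 1)
  rw [Bf_apply] at this
  simpa [Pi.single_apply, Finset.sum_ite_eq'] using this

lemma rowSpan_finrank (n a : ℕ) (ha1 : 1 ≤ a) (ha2 : a ≤ 2^n + 1) :
    Module.finrank (ZMod 2) (rowSpan n a) = 2^n + 1 - a := by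
  have hset : {r | ∃ k : Fin (2^n), a ≤ k.val + 1 ∧ r = FN n k}
      = Set.range (fun k : {k : Fin (2^n) // a ≤ k.val + 1} => FN n k.val) := by
    ext r
    constructor
    · rintro ⟨k, hk, rfl⟩; exact ⟨⟨k, hk⟩, rfl⟩
    · rintro ⟨⟨k, hk⟩, rfl⟩; exact ⟨k, hk, rfl⟩
  have hli : LinearIndependent (ZMod 2) (fun k : Fin (2^n) => FN n k) :=
    Matrix.linearIndependent_rows_iff_isUnit.mpr (FN_isUnit n)
  have hli2 : LinearIndependent (ZMod 2)
      (fun k : {k : Fin (2^n) // a ≤ k.val + 1} => FN n k.val) :=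
    hli.comp Subtype.val Subtype.val_injective
  rw [rowSpan, hset, finrank_span_eq_card hli2, ← Fintype.card_fin (2^n + 1 - a)]
  refine Fintype.card_congr ⟨fun k => ⟨k.val.val - (a-1), ?_⟩,
    fun m => ⟨⟨m.val + (a-1), ?_⟩, ?_⟩, fun k => ?_, fun m => ?_⟩
  · have h1 := k.val.isLt; have h2 := k.prop; omega
  · have := m.isLt; omega
  · exact (by omega : a ≤ m.val + (a-1) + 1)
  · have h2 := k.prop
    exact Subtype.ext (Fin.ext (show k.val.val - (a-1) + (a-1) = k.val.val by omega))
  · exact Fin.ext (show m.val + (a-1) - (a-1) = m.val by omega)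

lemma rowSpan_le_orthogonal (n a b : ℕ) (hab : 2^n + 2 ≤ a + b) :
    rowSpan n a ≤ (Bf n).orthogonal (rowSpan n b) := by
  rw [rowSpan, Submodule.span_le]
  rintro r ⟨k, hk, rfl⟩
  rw [SetLike.mem_coe, LinearMap.BilinForm.mem_orthogonal_iff]
  intro y hy
  rw [rowSpan] at hy
  induction hy using Submodule.span_induction with
  | mem x hx =>
    rcases hx with ⟨l, hl, rfl⟩
    rw [Bf_apply]
    exact FN_ortho n l k (by have := k.isLt; have := l.isLt; omega)
  | zero => simp [LinearMap.BilinForm.isOrtho_def]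
  | add x y _ _ hx hy =>
    rw [map_add, LinearMap.add_apply, hx, hy, add_zero]
  | smul c x _ hx =>
    rw [_root_.map_smul, LinearMap.smul_apply, hx, smul_zero]

lemma dualCode_eq_orthogonal (n : ℕ) (W : Submodule (ZMod 2) (Fin (2^n) → ZMod 2)) :
    dualCode n ↑W = ↑((Bf n).orthogonal W) := by
  ext v
  simp only [dualCode, Set.mem_setOf_eq, SetLike.mem_coe,
    LinearMap.BilinForm.mem_orthogonal_iff]
  constructor
  · intro h c hc
    rw [Bf_symm, Bf_apply]
    exact h c hc
  · intro h c hc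
    have := h c hc
    rw [Bf_symm, Bf_apply] at this
    exact this


/-- Duality of subcodes: for N/2 + 1 ≤ i ≤ N (1-indexed), the code generated by rows
    i..N of F_N and the code generated by rows N+2-i..N are dual codes of each other. -/
theorem rowSpan_dual (n : ℕ) (hn : 1 ≤ n) (i : ℕ)
    (hi1 : 2 ^ (n - 1) + 1 ≤ i) (hi2 : i ≤ 2 ^ n) :
    (rowSpan n (2 ^ n + 2 - i) : Set (Fin (2 ^ n) → ZMod 2)) =
        dualCode n (rowSpan n i : Set (Fin (2 ^ n) → ZMod 2)) ∧
    (rowSpan n i : Set (Fin (2 ^ n) → ZMod 2)) =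
        dualCode n (rowSpan n (2 ^ n + 2 - i) : Set (Fin (2 ^ n) → ZMod 2)) := by
  have hi0 : 1 ≤ i := by have := Nat.one_le_two_pow (n := n - 1); omega
  have hV : Module.finrank (ZMod 2) (Fin (2^n) → ZMod 2) = 2^n := by
    rw [Module.finrank_fintype_fun_eq_card, Fintype.card_fin]
  have key : ∀ a b : ℕ, 1 ≤ a → a ≤ 2^n + 1 → 1 ≤ b → b ≤ 2^n + 1 → a + b = 2^n + 2 →
      (rowSpan n a : Set (Fin (2 ^ n) → ZMod 2)) =
        dualCode n (rowSpan n b : Set (Fin (2 ^ n) → ZMod 2)) := by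
    intro a b ha1 ha2 hb1 hb2 hab
    rw [dualCode_eq_orthogonal]
    have heq : rowSpan n a = (Bf n).orthogonal (rowSpan n b) := by
      refine Submodule.eq_of_le_of_finrank_eq (rowSpan_le_orthogonal n a b (by omega)) ?_
      rw [LinearMap.BilinForm.finrank_orthogonal (Bf_nondeg n),
        rowSpan_finrank n a ha1 ha2, rowSpan_finrank n b hb1 hb2, hV]
      omega
    rw [heq]
  constructor
  · exact key _ _ (by omega) (by omega) (by omega) (by omega) (by omega)
  · exact key _ _ (by omega) (by omega) (by omega) (by omega) (by omega)
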